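/- arXiv:1605.08864 — 2 statements merged into one kernel-verified Lean document; each statement's English description precedes it below -/
import Mathlib

section
/- Let m ≥ 1 be a natural number, λ > 0 a real number, D : Fin m → Fin (m+1) → ℝ a function with D i x > 0 for all i and x, and P a probability mass function on Fin (m+1). For each x ∈ Fin (m+1), let ν_x be the product measure on ℝ^m (functions Fin m → ℝ) whose i-th factor is the exponential distribution with rate λ·D i x. Let μ be the measure on Fin (m+1) × (Fin m → ℝ) obtained by first sampling x according to P and then sampling t according to ν_x, i.e. μ is the bind of the measure induced by P with the kernel x ↦ (ν_x pushed forward by t ↦ (x, t)). Then the integral of the function (x, t) ↦ ∑_{i ∈ Fin m} t i with respect to μ equals (1/λ) · ∑_{x ∈ Fin (m+1)} ∑_{i ∈ Fin m} (1 / D i x) · P(x). -/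
open MeasureTheory ProbabilityTheory

open Real Set

lemma expMeasure_eq (r : ℝ) :
    expMeasure r = volume.withDensity
      (fun x => ((exponentialPDFReal r x).toNNReal : ENNReal)) := rfl

lemma integrable_mul_expPDF {r : ℝ} (hr : 0 < r) :
    Integrable (fun x : ℝ => exponentialPDFReal r x * x) := by
  have h0 : IntegrableOn (fun x : ℝ => exponentialPDFReal r x * x) (Ioi 0) := by
    have h := integrableOn_rpow_mul_exp_neg_mul_rpow (s := 1) (p := 1)
      (by norm_num) zero_lt_one hr
    have h' : IntegrableOn (fun x : ℝ => r * (x * Real.exp (-(r * x)))) (Ioi 0) :=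
      IntegrableOn.congr_fun (h.const_mul r) (fun x hx => by
        simp only [rpow_one]; ring_nf) measurableSet_Ioi
    refine IntegrableOn.congr_fun h' (fun x hx => ?_) measurableSet_Ioi
    rw [exponentialPDFReal, gammaPDFReal, if_pos (le_of_lt hx)]
    simp [Real.rpow_one, Real.Gamma_one]
    ring
  have hind : (fun x : ℝ => exponentialPDFReal r x * x) =
      (Ioi 0).indicator (fun x : ℝ => exponentialPDFReal r x * x) := by
    ext x
    by_cases hx : x ∈ Ioi 0
    · rw [Set.indicator_of_mem hx]
    · rw [Set.indicator_of_notMem hx]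
      rcases lt_or_eq_of_le (le_of_not_gt (by simpa using hx)) with h | h
      · rw [exponentialPDFReal, gammaPDFReal, if_neg (not_le.mpr h), zero_mul]
      · rw [h, mul_zero]
  rw [hind]
  exact (integrable_indicator_iff measurableSet_Ioi).mpr h0

lemma integral_mul_expPDF {r : ℝ} (hr : 0 < r) :
    ∫ x : ℝ, exponentialPDFReal r x * x = 1 / r := by
  rw [← setIntegral_eq_integral_of_forall_compl_eq_zero (s := Ioi 0) (by
    intro x hx
    rcases lt_or_eq_of_le (le_of_not_gt (by simpa using hx)) with h | h
    · rw [exponentialPDFReal, gammaPDFReal, if_neg (not_le.mpr h), zero_mul]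
    · rw [h, mul_zero])]
  have : ∫ x in Ioi 0, exponentialPDFReal r x * x =
      ∫ x in Ioi 0, r * (x ^ ((2:ℝ) - 1) * Real.exp (-(r * x))) := by
    refine setIntegral_congr_fun measurableSet_Ioi (fun x hx => ?_)
    rw [exponentialPDFReal, gammaPDFReal, if_pos (le_of_lt (mem_Ioi.mp hx))]
    simp [Real.rpow_one, Real.Gamma_one]
    rw [show (2:ℝ) - 1 = 1 by norm_num, Real.rpow_one]
    ring
  rw [this, integral_const_mul, integral_rpow_mul_exp_neg_mul_Ioi (by norm_num) hr]
  have hG : Real.Gamma 2 = 1 := by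
    rw [show (2:ℝ) = (1:ℕ) + 1 by norm_num, Real.Gamma_nat_eq_factorial]
    simp
  rw [hG]
  field_simp
  ring_nf
  simp [hr.ne']

lemma integrable_id_expMeasure {r : ℝ} (hr : 0 < r) :
    Integrable (id : ℝ → ℝ) (expMeasure r) := by
  rw [expMeasure_eq]
  rw [integrable_withDensity_iff_integrable_smul
    ((measurable_exponentialPDFReal r).real_toNNReal)]
  refine (integrable_mul_expPDF hr).congr (Filter.Eventually.of_forall fun x => ?_)
  simp [NNReal.smul_def, Real.coe_toNNReal _ (exponentialPDFReal_nonneg hr x)]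

lemma integral_id_expMeasure {r : ℝ} (hr : 0 < r) :
    ∫ x, x ∂(expMeasure r) = 1 / r := by
  rw [expMeasure_eq, integral_withDensity_eq_integral_smul
    ((measurable_exponentialPDFReal r).real_toNNReal)]
  rw [← integral_mul_expPDF hr]
  congr 1; ext x
  simp [NNReal.smul_def, Real.coe_toNNReal _ (exponentialPDFReal_nonneg hr x)]


lemma pi_map_eval {ι : Type*} [Fintype ι] [DecidableEq ι] (μ : ι → Measure ℝ)
    [∀ i, IsProbabilityMeasure (μ i)] (i : ι) :
    (Measure.pi μ).map (Function.eval i) = μ i := by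
  ext s hs
  rw [Measure.map_apply (measurable_pi_apply i) hs, Set.eval_preimage, Measure.pi_pi]
  rw [Finset.prod_eq_single i (fun j _ hj => by simp [Function.update_of_ne hj])
    (fun h => absurd (Finset.mem_univ i) h)]
  simp

/-- Theorem 1 of the paper: the expected BGP convergence time in a hybrid SDN/BGP
inter-domain topology. The dissemination proceeds through `m = N - k` steps; given that the
SDN cluster receives the update at step `x` (distributed according to the PMF `P`), the
step durations are independent and step `i` is exponentially distributed with rate
`λ * D i x`.  The expected total time is `(1/λ) * ∑ x ∑ i (1 / D i x) * P x`. -/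
theorem expected_bgp_convergence_time
    (m : ℕ) (hm : 1 ≤ m) (lam : ℝ) (hlam : 0 < lam)
    (D : Fin m → Fin (m + 1) → ℝ) (hD : ∀ i x, 0 < D i x)
    (P : PMF (Fin (m + 1)))
    (ν : Fin (m + 1) → Measure (Fin m → ℝ))
    (hν : ∀ x, ν x = Measure.pi fun i => expMeasure (lam * D i x))
    (μ : Measure (Fin (m + 1) × (Fin m → ℝ)))
    (hμ : μ = P.toMeasure.bind fun x => (ν x).map fun t => (x, t)) :
    ∫ p : Fin (m + 1) × (Fin m → ℝ), (∑ i, p.2 i) ∂μ =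
      (1 / lam) * ∑ x, ∑ i, (1 / D i x) * (P x).toReal := by
  classical
  have hprob : ∀ x i, IsProbabilityMeasure (expMeasure (lam * D i x)) :=
    fun x i => isProbabilityMeasure_expMeasure (mul_pos hlam (hD i x))
  have hfmeas : Measurable (fun p : Fin (m + 1) × (Fin m → ℝ) => ∑ i, p.2 i) :=
    Finset.measurable_sum _ fun i _ => (measurable_pi_apply i).comp measurable_snd
  have hint : ∀ x i, Integrable (fun t : Fin m → ℝ => t i) (ν x) := by
    intro x i
    haveI : ∀ j, IsProbabilityMeasure (expMeasure (lam * D j x)) := hprob x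
    rw [hν]
    have hmap := pi_map_eval (fun j => expMeasure (lam * D j x)) i
    have hev : Measurable (Function.eval i : (Fin m → ℝ) → ℝ) := measurable_pi_apply i
    have h2 : Integrable (id : ℝ → ℝ)
          ((Measure.pi fun j => expMeasure (lam * D j x)).map (Function.eval i)) ↔
        Integrable ((id : ℝ → ℝ) ∘ Function.eval i)
          (Measure.pi fun j => expMeasure (lam * D j x)) :=
      integrable_map_measure aestronglyMeasurable_id hev.aemeasurable
    rw [hmap] at h2
    exact h2.mp (integrable_id_expMeasure (mul_pos hlam (hD i x)))
  have hintsum : ∀ x, Integrable (fun t : Fin m → ℝ => ∑ i, t i) (ν x) :=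
    fun x => integrable_finset_sum _ fun i _ => hint x i
  have hcoord : ∀ x i, ∫ t, t i ∂(ν x) = 1 / (lam * D i x) := by
    intro x i
    haveI : ∀ j, IsProbabilityMeasure (expMeasure (lam * D j x)) := hprob x
    rw [hν]
    calc ∫ t : Fin m → ℝ, t i ∂(Measure.pi fun j => expMeasure (lam * D j x))
        = ∫ y, id y ∂((Measure.pi fun j => expMeasure (lam * D j x)).map
            (Function.eval i)) := by
          have hev : Measurable (Function.eval i : (Fin m → ℝ) → ℝ) :=
            measurable_pi_apply i
          exact (integral_map (φ := Function.eval i) hev.aemeasurable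
            aestronglyMeasurable_id).symm
      _ = 1 / (lam * D i x) := by
          rw [pi_map_eval (fun j => expMeasure (lam * D j x)) i]
          simpa using integral_id_expMeasure (mul_pos hlam (hD i x))
  have hνint : ∀ x, ∫ t, (∑ i, t i) ∂(ν x) = ∑ i, 1 / (lam * D i x) := by
    intro x
    rw [integral_finset_sum _ (fun i _ => hint x i)]
    exact Finset.sum_congr rfl fun i _ => hcoord x i
  have hκmeas : Measurable fun x => (ν x).map fun t => (x, t) :=
    measurable_of_countable _
  have hμ' : μ = ∑ x : Fin (m + 1), (P x) • ((ν x).map fun t => (x, t)) := by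
    rw [hμ]
    ext s hs
    rw [Measure.bind_apply hs hκmeas.aemeasurable, lintegral_fintype, Measure.finset_sum_apply]
    refine Finset.sum_congr rfl fun x _ => ?_
    rw [Measure.smul_apply, smul_eq_mul,
      P.toMeasure_apply_singleton x (measurableSet_singleton x), mul_comm]
  have hintκ : ∀ x, Integrable (fun p : Fin (m + 1) × (Fin m → ℝ) => ∑ i, p.2 i)
      ((ν x).map fun t => (x, t)) := by
    intro x
    rw [integrable_map_measure hfmeas.aestronglyMeasurable
      measurable_prodMk_left.aemeasurable]
    exact hintsum x
  have hκint : ∀ x, ∫ p, (∑ i, p.2 i) ∂((ν x).map fun t => (x, t)) =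
      ∑ i, 1 / (lam * D i x) := by
    intro x
    rw [integral_map measurable_prodMk_left.aemeasurable hfmeas.aestronglyMeasurable]
    exact hνint x
  rw [hμ', integral_finset_sum_measure
    (fun x _ => (hintκ x).smul_measure (P.apply_ne_top x))]
  simp_rw [integral_smul_measure, hκint]
  rw [Finset.mul_sum]
  refine Finset.sum_congr rfl fun x _ => ?_
  rw [smul_eq_mul, Finset.mul_sum, Finset.mul_sum]
  refine Finset.sum_congr rfl fun i _ => ?_
  have h1 : D i x ≠ 0 := (hD i x).ne'
  have h2 : lam ≠ 0 := hlam.ne'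
  field_simp
end

section
/- Let N ≥ 1 and 1 ≤ k ≤ N be natural numbers, and let S be a subset of Fin N with |S| = k. Under the uniform probability distribution on the permutations σ of Fin N, for every natural number x with 0 ≤ x ≤ N−k, the probability of the event that the minimum of the set {σ⁻¹(s) : s ∈ S} of (0-indexed) positions occupied by elements of S equals x is P_sdn(x) = (k/(N−x)) · ∏_{j=0}^{x−1} (1 − k/(N−j)) (all arithmetic in ℝ; the empty product for x = 0 equals 1). -/
open MeasureTheory

open Finset Equiv

lemma filter_card_equiv {α β : Type*} [Fintype α] [Fintype β] (e : α ≃ β)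
    (P : α → Prop) [DecidablePred P] :
    (Finset.univ.filter P).card
      = (Finset.univ.filter (fun b => P (e.symm b))).card := by
  rw [← Fintype.card_subtype, ← Fintype.card_subtype]
  exact Fintype.card_congr (e.subtypeEquiv (fun a => by simp))

lemma card_filter_prod {γ δ : Type*} [Fintype γ] [Fintype δ]
    (Q : γ × δ → Prop) [DecidablePred Q] :
    (Finset.univ.filter Q).card
      = ∑ p : γ, (Finset.univ.filter fun e => Q (p, e)).card := by
  rw [Finset.card_filter, ← Finset.univ_product_univ, Finset.sum_product]
  exact Finset.sum_congr rfl fun p _ => (Finset.card_filter _ _).symm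

lemma count_aux (x : ℕ) :
    ∀ (n : ℕ) (hxn : x < n) (S : Finset (Fin n)),
    (Finset.univ.filter (fun σ : Equiv.Perm (Fin n) =>
      (∀ j : Fin n, (j : ℕ) < x → σ j ∉ S) ∧ σ ⟨x, hxn⟩ ∈ S)).card
      = S.card * (n - S.card).descFactorial x * Nat.factorial (n - 1 - x) := by
  induction x with
  | zero =>
    rintro (_ | m) hxn S
    · exact absurd hxn (lt_irrefl 0)
    · rw [filter_card_equiv Equiv.Perm.decomposeFin]
      have h1 : (Finset.univ.filter fun pe : Fin (m+1) × Equiv.Perm (Fin m) =>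
          (∀ j : Fin (m+1), (j : ℕ) < 0 → Equiv.Perm.decomposeFin.symm pe j ∉ S)
            ∧ Equiv.Perm.decomposeFin.symm pe ⟨0, hxn⟩ ∈ S) = S ×ˢ Finset.univ := by
        ext ⟨p, e⟩
        simp [Fin.mk_zero, Equiv.Perm.decomposeFin_symm_apply_zero]
      rw [h1, Finset.card_product]
      simp [Fintype.card_perm, Fintype.card_fin]
  | succ x ih =>
    rintro (_ | m) hxn S
    · exact absurd hxn (by omega)
    · have hxm : x < m := by omega
      rw [filter_card_equiv Equiv.Perm.decomposeFin, card_filter_prod]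
      have key : ∀ p : Fin (m+1),
          (Finset.univ.filter fun e : Equiv.Perm (Fin m) =>
            (∀ j : Fin (m+1), (j : ℕ) < x + 1 →
                Equiv.Perm.decomposeFin.symm (p, e) j ∉ S)
              ∧ Equiv.Perm.decomposeFin.symm (p, e) ⟨x + 1, hxn⟩ ∈ S).card
          = if p ∈ S then 0
            else S.card * (m - S.card).descFactorial x * Nat.factorial (m - 1 - x) := by
        intro p
        by_cases hp : p ∈ S
        · rw [if_pos hp, Finset.card_eq_zero, Finset.filter_eq_empty_iff]
          rintro e - ⟨h0, -⟩
          exact (h0 0 (by simp)) (by simpa using hp)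
        · rw [if_neg hp]
          set T : Finset (Fin m) :=
            Finset.univ.filter (fun i : Fin m => Equiv.swap 0 p i.succ ∈ S) with hTdef
          have hT : T.card = S.card := by
            apply Finset.card_bij (fun i _ => Equiv.swap 0 p i.succ)
            · intro a ha; simpa [hTdef] using ha
            · intro a _ b _ h
              exact Fin.succ_injective _ ((Equiv.swap 0 p).injective h)
            · intro s hs
              have hsp : s ≠ p := fun h => hp (h ▸ hs)
              have ht0 : Equiv.swap 0 p s ≠ 0 := by
                intro h
                apply hsp
                have := congrArg (Equiv.swap 0 p) h
                simpa [Equiv.swap_apply_self] using this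
              obtain ⟨i, hi⟩ := Fin.eq_succ_of_ne_zero ht0
              refine ⟨i, ?_, ?_⟩
              · simp only [hTdef, Finset.mem_filter, Finset.mem_univ, true_and]
                rw [← hi]
                simpa [Equiv.swap_apply_self] using hs
              · rw [← hi]
                simp [Equiv.swap_apply_self]
          have hcond : ∀ e : Equiv.Perm (Fin m),
              ((∀ j : Fin (m+1), (j : ℕ) < x + 1 →
                  Equiv.Perm.decomposeFin.symm (p, e) j ∉ S)
                ∧ Equiv.Perm.decomposeFin.symm (p, e) ⟨x + 1, hxn⟩ ∈ S)
              ↔ ((∀ j : Fin m, (j : ℕ) < x → e j ∉ T) ∧ e ⟨x, hxm⟩ ∈ T) := by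
            intro e
            have hsucc : (⟨x + 1, hxn⟩ : Fin (m+1)) = Fin.succ ⟨x, hxm⟩ := rfl
            constructor
            · rintro ⟨h1, h2⟩
              refine ⟨fun j hj hjT => ?_, ?_⟩
              · have := h1 j.succ (by simp [Fin.val_succ]; omega)
                rw [Equiv.Perm.decomposeFin_symm_apply_succ] at this
                exact this (by simpa [hTdef] using hjT)
              · rw [hsucc, Equiv.Perm.decomposeFin_symm_apply_succ] at h2
                simpa [hTdef] using h2
            · rintro ⟨h1, h2⟩
              refine ⟨fun j hj => ?_, ?_⟩
              · refine Fin.cases ?_ ?_ j hj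
                · intro _
                  simpa [Equiv.Perm.decomposeFin_symm_apply_zero] using hp
                · intro i hi
                  rw [Equiv.Perm.decomposeFin_symm_apply_succ]
                  have : (i : ℕ) < x := by simpa [Fin.val_succ] using hi
                  have := h1 i this
                  simpa [hTdef] using this
              · rw [hsucc, Equiv.Perm.decomposeFin_symm_apply_succ]
                simpa [hTdef] using h2
          calc (Finset.univ.filter fun e : Equiv.Perm (Fin m) =>
                (∀ j : Fin (m+1), (j : ℕ) < x + 1 →
                    Equiv.Perm.decomposeFin.symm (p, e) j ∉ S)
                  ∧ Equiv.Perm.decomposeFin.symm (p, e) ⟨x + 1, hxn⟩ ∈ S).card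
              = (Finset.univ.filter fun e : Equiv.Perm (Fin m) =>
                  (∀ j : Fin m, (j : ℕ) < x → e j ∉ T) ∧ e ⟨x, hxm⟩ ∈ T).card := by
                apply Finset.card_bij (fun e _ => e) <;> simp_all [hcond]
            _ = S.card * (m - S.card).descFactorial x * Nat.factorial (m - 1 - x) := by
                rw [ih m hxm T, hT]
      rw [Finset.sum_congr rfl (fun p _ => key p)]
      rw [Finset.sum_ite, Finset.sum_const_zero, Finset.sum_const, zero_add, nsmul_eq_mul]
      have hcompl : (Finset.univ.filter (fun p : Fin (m+1) => ¬ p ∈ S)) = Sᶜ := by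
        ext p; simp
      rw [hcompl, Finset.card_compl, Fintype.card_fin]
      have hfac : m + 1 - 1 - (x + 1) = m - 1 - x := by omega
      rw [hfac]
      have hk_le : S.card ≤ m + 1 := by
        simpa using Finset.card_le_univ S
      rcases Nat.lt_or_ge S.card (m + 1) with h | h
      · have h2 : m + 1 - S.card = (m - S.card) + 1 := by omega
        rw [h2, Nat.succ_descFactorial_succ]
        push_cast
        ring
      · have hEq : S.card = m + 1 := le_antisymm hk_le h
        rw [hEq]
        simp

open MeasureTheory

lemma uniform_toReal (α : Type*) [Fintype α] [Nonempty α] (E : Set α) [DecidablePred (· ∈ E)] :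
    (@PMF.toMeasure _ ⊤ (PMF.uniformOfFintype α) E).toReal
      = (Finset.univ.filter (· ∈ E)).card / Fintype.card α := by
  letI : MeasurableSpace α := ⊤
  have hm : MeasurableSet E := trivial
  rw [PMF.toMeasure_apply _ hm]
  rw [tsum_eq_sum (s := Finset.univ) (by simp)]
  simp only [Set.indicator_apply, PMF.uniformOfFintype_apply]
  rw [← Finset.sum_filter, Finset.sum_const, nsmul_eq_mul]
  rw [ENNReal.toReal_mul, ENNReal.toReal_inv]
  simp [div_eq_mul_inv]



/-- Theorem 2 of the paper: in a uniformly random reception order (permutation) of the `N`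
ASes, the probability that the first (0-indexed) position occupied by an element of the SDN
cluster `S` (of size `k`) equals `x` is `P_sdn(x) = (k/(N-x)) * ∏_{j=0}^{x-1} (1 - k/(N-j))`. -/
theorem prob_sdn_first_position_eq
    (N k : ℕ) (hN : 1 ≤ N) (hk : 1 ≤ k) (hkN : k ≤ N)
    (S : Finset (Fin N)) (hS : S.card = k)
    (x : ℕ) (hx : x ≤ N - k) :
    (@PMF.toMeasure _ ⊤ (PMF.uniformOfFintype (Equiv.Perm (Fin N)))
        {σ : Equiv.Perm (Fin N) | (⨅ s : S, ((σ.symm s.1 : Fin N) : ℕ)) = x}).toReal =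
      ((k : ℝ) / ((N : ℝ) - x)) * ∏ j ∈ Finset.range x, (1 - (k : ℝ) / ((N : ℝ) - j)) := by
  classical
  have hxN : x < N := by omega
  have hSne : S.Nonempty := Finset.card_pos.mp (by omega)
  haveI hne : Nonempty {s // s ∈ S} := ⟨⟨hSne.choose, hSne.choose_spec⟩⟩
  have hset : ∀ σ : Equiv.Perm (Fin N),
      (⨅ s : S, ((σ.symm s.1 : Fin N) : ℕ)) = x
        ↔ ((∀ j : Fin N, (j : ℕ) < x → σ j ∉ S) ∧ σ ⟨x, hxN⟩ ∈ S) := by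
    intro σ
    constructor
    · intro h
      have hmem : (⨅ s : S, ((σ.symm s.1 : Fin N) : ℕ))
          ∈ Set.range fun s : S => ((σ.symm s.1 : Fin N) : ℕ) :=
        Nat.sInf_mem (Set.range_nonempty _)
      rw [h] at hmem
      obtain ⟨⟨s, hs⟩, hsx⟩ := hmem
      constructor
      · intro j hj hjS
        have hle : (⨅ s : S, ((σ.symm s.1 : Fin N) : ℕ)) ≤ ((σ.symm (σ j) : Fin N) : ℕ) :=
          ciInf_le' _ (⟨σ j, hjS⟩ : S)
        rw [h, Equiv.symm_apply_apply] at hle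
        omega
      · have hxs : σ.symm s = ⟨x, hxN⟩ := Fin.ext hsx
        have : σ ⟨x, hxN⟩ = s := by rw [← hxs, Equiv.apply_symm_apply]
        rwa [this]
    · rintro ⟨h1, h2⟩
      apply le_antisymm
      · have := ciInf_le' (fun s : S => ((σ.symm s.1 : Fin N) : ℕ)) (⟨σ ⟨x, hxN⟩, h2⟩ : S)
        simpa using this
      · apply le_ciInf
        rintro ⟨s, hs⟩
        by_contra hlt
        push_neg at hlt
        have := h1 (σ.symm s) (by simpa using hlt)
        rw [Equiv.apply_symm_apply] at this
        exact this hs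
  rw [uniform_toReal]
  have hfilter : (Finset.univ.filter
      (· ∈ {σ : Equiv.Perm (Fin N) | (⨅ s : S, ((σ.symm s.1 : Fin N) : ℕ)) = x}))
      = (Finset.univ.filter (fun σ : Equiv.Perm (Fin N) =>
          (∀ j : Fin N, (j : ℕ) < x → σ j ∉ S) ∧ σ ⟨x, hxN⟩ ∈ S)) := by
    apply Finset.filter_congr
    intro σ _
    simpa using hset σ
  rw [hfilter, count_aux x N hxN S, hS]
  rw [Fintype.card_perm, Fintype.card_fin]
  -- real arithmetic
  have hNx : (0 : ℝ) < (N : ℝ) - x := by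
    have : (x : ℝ) < N := by exact_mod_cast hxN
    linarith
  have hprod : ∏ j ∈ Finset.range x, (1 - (k : ℝ) / ((N : ℝ) - j))
      = ((N - k).descFactorial x : ℝ) / (N.descFactorial x : ℝ) := by
    rw [Nat.descFactorial_eq_prod_range, Nat.descFactorial_eq_prod_range,
      Nat.cast_prod, Nat.cast_prod, ← Finset.prod_div_distrib]
    apply Finset.prod_congr rfl
    intro j hj
    have hjx : j < x := Finset.mem_range.mp hj
    have hjNk : j ≤ N - k := by omega
    have hjN : j < N := by omega
    rw [Nat.cast_sub hjNk, Nat.cast_sub hjN.le, Nat.cast_sub hkN]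
    have hNj : (0 : ℝ) < (N : ℝ) - j := by
      have : (j : ℝ) < N := by exact_mod_cast hjN
      linarith
    field_simp
    ring
  rw [hprod]
  have hfac : (N : ℕ).factorial = (N - x) * Nat.factorial (N - 1 - x) * N.descFactorial x := by
    rw [← Nat.factorial_mul_descFactorial hxN.le]
    congr 1
    have h1 : N - x = (N - 1 - x) + 1 := by omega
    rw [h1, Nat.factorial_succ]
  rw [hfac]
  have hdF : (0 : ℝ) < (N.descFactorial x : ℝ) := by
    have h0 : N.descFactorial x ≠ 0 := by
      simp only [ne_eq, Nat.descFactorial_eq_zero_iff_lt]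
      omega
    exact_mod_cast Nat.pos_of_ne_zero h0
  have hF : (0 : ℝ) < (Nat.factorial (N - 1 - x) : ℝ) := by
    exact_mod_cast Nat.factorial_pos _
  have hcast : ((N - x : ℕ) : ℝ) = (N : ℝ) - x := by
    rw [Nat.cast_sub hxN.le]
  push_cast
  rw [hcast]
  field_simp
end
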